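/- For every x with 0 < x ≤ A0, letting R_x = √((ω²/2)·ln(A0/x)), the tail probability of the Rician pointing-error radius admits the exact series representation ∫_{R_x}^∞ f_r(r) dr = e^{−ν} · ∑_{n=0}^∞ (ν^n/(n!)²) · Γ(n+1, γ²·ln(A0/x)), where Γ(n+1, b) = ∫_b^∞ ξ^n e^{−ξ} dξ is the upper incomplete gamma function. -/

import Mathlib

open Real MeasureTheory

private lemma image_sq_div (C R bb : ℝ) (hC : 0 < C) (hR : 0 ≤ R)
    (hRb : R ^ 2 / (2 * C) = bb) :
    (fun r : ℝ => r ^ 2 / (2 * C)) '' Set.Ioi R = Set.Ioi bb := by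
  have h2C : 0 < 2 * C := by linarith
  ext y
  simp only [Set.mem_image, Set.mem_Ioi]
  constructor
  · rintro ⟨r, hr, rfl⟩
    have h1 : R ^ 2 < r ^ 2 := by nlinarith
    rw [← hRb]
    exact (div_lt_div_iff_of_pos_right h2C).mpr h1
  · intro hy
    have hb0 : 0 ≤ bb := by rw [← hRb]; positivity
    have hy0 : 0 ≤ y := le_trans hb0 hy.le
    refine ⟨Real.sqrt (2 * C * y), ?_, ?_⟩
    · have hR2 : R ^ 2 = 2 * C * bb := by
        field_simp at hRb; linarith [hRb]
      have : Real.sqrt (2 * C * bb) < Real.sqrt (2 * C * y) := by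
        apply Real.sqrt_lt_sqrt (by positivity)
        exact (mul_lt_mul_iff_right₀ h2C).mpr hy
      rwa [← hR2, Real.sqrt_sq hR] at this
    · rw [Real.sq_sqrt (by positivity)]
      field_simp

private lemma sq_div_hasDeriv (C R : ℝ) :
    ∀ r ∈ Set.Ioi R, HasDerivWithinAt (fun r : ℝ => r ^ 2 / (2 * C))
      (r / C) (Set.Ioi R) r := by
  intro r _
  by_cases hC : C = 0
  · simp only [hC, mul_zero, div_zero]
    exact (hasDerivWithinAt_const _ _ 0).congr_deriv (by simp [hC])
  · have h := ((hasDerivAt_pow 2 r).div_const (2 * C)).hasDerivWithinAt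
      (s := Set.Ioi R)
    convert h using 1
    · rfl
    · rfl
    push_cast
    field_simp

private lemma sq_div_injOn (C R : ℝ) (hC : 0 < C) (hR : 0 ≤ R) :
    Set.InjOn (fun r : ℝ => r ^ 2 / (2 * C)) (Set.Ioi R) := by
  intro a ha b hb hE
  have ha0 : 0 ≤ a := le_trans hR ha.le
  have hb0 : 0 ≤ b := le_trans hR hb.le
  simp only at hE
  field_simp at hE
  first
  | exact hE
  | · have := congrArg Real.sqrt hE
      rwa [Real.sqrt_sq ha0, Real.sqrt_sq hb0] at this

private lemma sub_eq (C R bb : ℝ) (hC : 0 < C) (hR : 0 ≤ R)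
    (hRb : R ^ 2 / (2 * C) = bb) (g : ℝ → ℝ) :
    ∫ ξ in Set.Ioi bb, g ξ
      = ∫ r in Set.Ioi R, (r / C) * g (r ^ 2 / (2 * C)) := by
  rw [← image_sq_div C R bb hC hR hRb,
    integral_image_eq_integral_abs_deriv_smul measurableSet_Ioi
      (sq_div_hasDeriv C R) (sq_div_injOn C R hC hR) g]
  apply setIntegral_congr_fun measurableSet_Ioi
  intro r hr
  have hr0 : 0 ≤ r := le_trans hR (le_of_lt hr)
  simp only [smul_eq_mul, abs_of_nonneg (show (0:ℝ) ≤ r / C by positivity)]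

private lemma sub_int (C R bb : ℝ) (hC : 0 < C) (hR : 0 ≤ R)
    (hRb : R ^ 2 / (2 * C) = bb) (g : ℝ → ℝ)
    (hg : IntegrableOn g (Set.Ioi bb)) :
    IntegrableOn (fun r => (r / C) * g (r ^ 2 / (2 * C))) (Set.Ioi R) := by
  rw [← image_sq_div C R bb hC hR hRb] at hg
  rw [integrableOn_image_iff_integrableOn_abs_deriv_smul measurableSet_Ioi
    (sq_div_hasDeriv C R) (sq_div_injOn C R hC hR) g] at hg
  apply hg.congr_fun ?_ measurableSet_Ioi
  intro r hr
  have hr0 : 0 ≤ r := le_trans hR (le_of_lt hr)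
  simp only [smul_eq_mul, abs_of_nonneg (show (0:ℝ) ≤ r / C by positivity)]

private lemma gamma_int_Ioi_zero (n : ℕ) :
    IntegrableOn (fun ξ : ℝ => ξ ^ n * Real.exp (-ξ)) (Set.Ioi (0:ℝ)) := by
  have h := Real.GammaIntegral_convergent (s := (n:ℝ) + 1) (by positivity)
  apply h.congr_fun ?_ measurableSet_Ioi
  intro ξ hξ
  simp only [add_sub_cancel_right, Real.rpow_natCast, mul_comm]

private lemma gamma_val (n : ℕ) :
    ∫ ξ in Set.Ioi (0:ℝ), ξ ^ n * Real.exp (-ξ) = (n.factorial : ℝ) := by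
  have h1 := Real.Gamma_eq_integral (s := (n:ℝ) + 1) (by positivity)
  have h2 : Real.Gamma ((n:ℝ) + 1) = (n.factorial : ℝ) := by
    exact_mod_cast Real.Gamma_nat_eq_factorial n
  rw [h2] at h1
  rw [h1]
  apply setIntegral_congr_fun measurableSet_Ioi
  intro ξ hξ
  simp only [add_sub_cancel_right, Real.rpow_natCast, mul_comm]

/-- Exact series representation of the Rician tail probability: for `0 < x ≤ A0`,
with `R_x = √((ω²/2) ln(A0/x))`,
`∫_{R_x}^∞ f_r = e^{−ν} ∑_{n} (ν^n/(n!)²) Γ(n+1, γ² ln(A0/x))`. -/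
theorem rician_tail_series
    (A0 ω ℓ σ s : ℝ) (hA0 : 0 < A0) (hω : 0 < ω) (hℓ : 0 < ℓ) (hσ : 0 < σ)
    (hs : 0 ≤ s)
    (γ ν : ℝ) (hγ : γ = ω / (2 * ℓ * σ)) (hν : ν = s ^ 2 / (2 * ℓ ^ 2 * σ ^ 2))
    (I0 fr : ℝ → ℝ)
    (hI0 : ∀ p, I0 p = ∑' n : ℕ, (p / 2) ^ (2 * n) / ((n.factorial : ℝ)) ^ 2)
    (hfr : ∀ r, 0 ≤ r → fr r =
      (r / (ℓ ^ 2 * σ ^ 2)) * Real.exp (-((r ^ 2 + s ^ 2) / (2 * ℓ ^ 2 * σ ^ 2)))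
        * I0 (r * s / (ℓ ^ 2 * σ ^ 2))) :
    ∀ x, 0 < x → x ≤ A0 →
      (∫ r in Set.Ioi (Real.sqrt ((ω ^ 2 / 2) * Real.log (A0 / x))), fr r)
        = Real.exp (-ν) *
            ∑' n : ℕ, (ν ^ n / ((n.factorial : ℝ)) ^ 2) *
              ∫ ξ in Set.Ioi (γ ^ 2 * Real.log (A0 / x)),
                ξ ^ n * Real.exp (-ξ) := by
  intro x hx hxA
  have hν0 : 0 ≤ ν := by rw [hν]; positivity
  set C : ℝ := ℓ ^ 2 * σ ^ 2 with hCdef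
  have hC : 0 < C := by positivity
  set L : ℝ := Real.log (A0 / x) with hLdef
  have hL0 : 0 ≤ L := Real.log_nonneg (by rw [le_div_iff₀ hx]; linarith)
  set R : ℝ := Real.sqrt ((ω ^ 2 / 2) * L) with hRdef
  have hR0 : 0 ≤ R := Real.sqrt_nonneg _
  set bb : ℝ := γ ^ 2 * L with hbdef
  have hRb : R ^ 2 / (2 * C) = bb := by
    have hsq : R ^ 2 = ω ^ 2 / 2 * L := Real.sq_sqrt (by positivity)
    rw [hsq, hbdef, hγ, hCdef, div_eq_iff (by positivity : (0:ℝ) < 2 * (ℓ ^ 2 * σ ^ 2)).ne']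
    field_simp
  have hb0 : 0 ≤ bb := by rw [← hRb]; positivity
  -- the summand functions after substitution
  set h : ℕ → ℝ → ℝ := fun n r =>
    (ν ^ n / ((n.factorial : ℝ)) ^ 2) *
      ((r / C) * ((r ^ 2 / (2 * C)) ^ n * Real.exp (-(r ^ 2 / (2 * C))))) with hhdef
  have hIntb : ∀ n : ℕ, IntegrableOn (fun ξ : ℝ => ξ ^ n * Real.exp (-ξ)) (Set.Ioi bb) :=
    fun n => (gamma_int_Ioi_zero n).mono_set (Set.Ioi_subset_Ioi hb0)
  have hint : ∀ n : ℕ, IntegrableOn (h n) (Set.Ioi R) := by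
    intro n
    exact (sub_int C R bb hC hR0 hRb (fun ξ => ξ ^ n * Real.exp (-ξ)) (hIntb n)).const_mul _
  have hval : ∀ n : ℕ, ∫ r in Set.Ioi R, h n r
      = (ν ^ n / ((n.factorial : ℝ)) ^ 2) * ∫ ξ in Set.Ioi bb, ξ ^ n * Real.exp (-ξ) := by
    intro n
    rw [hhdef]
    simp only
    rw [MeasureTheory.integral_const_mul,
      sub_eq C R bb hC hR0 hRb (fun ξ => ξ ^ n * Real.exp (-ξ))]
  have hpos : ∀ n : ℕ, ∀ r ∈ Set.Ioi R, 0 ≤ h n r := by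
    intro n r hr
    have hr0 : 0 ≤ r := le_trans hR0 (le_of_lt hr)
    rw [hhdef]
    positivity
  have hbound : ∀ n : ℕ, ∫ r in Set.Ioi R, h n r ≤ ν ^ n / (n.factorial : ℝ) := by
    intro n
    rw [hval n]
    have hfac : (0:ℝ) < (n.factorial : ℝ) := by exact_mod_cast n.factorial_pos
    have hmono : ∫ ξ in Set.Ioi bb, ξ ^ n * Real.exp (-ξ)
        ≤ ∫ ξ in Set.Ioi (0:ℝ), ξ ^ n * Real.exp (-ξ) := by
      apply setIntegral_mono_set (gamma_int_Ioi_zero n)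
      · filter_upwards [ae_restrict_mem measurableSet_Ioi] with ξ hξ
        have : 0 < ξ := hξ
        positivity
      · exact Filter.Eventually.of_forall (Set.Ioi_subset_Ioi hb0)
    calc (ν ^ n / ((n.factorial : ℝ)) ^ 2) * ∫ ξ in Set.Ioi bb, ξ ^ n * Real.exp (-ξ)
        ≤ (ν ^ n / ((n.factorial : ℝ)) ^ 2) * (n.factorial : ℝ) := by
          rw [← gamma_val n]
          exact mul_le_mul_of_nonneg_left hmono (by positivity)
      _ = ν ^ n / (n.factorial : ℝ) := by
          field_simp
  have hmeas : ∀ n : ℕ, AEStronglyMeasurable (h n) (volume.restrict (Set.Ioi R)) := by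
    intro n
    apply Continuous.aestronglyMeasurable
    rw [hhdef]
    fun_prop
  have hlin : ∀ n : ℕ, (∫⁻ r in Set.Ioi R, ‖h n r‖₊)
      = ENNReal.ofReal (∫ r in Set.Ioi R, h n r) := by
    intro n
    simp only [← enorm_eq_nnnorm]
    rw [← ofReal_integral_norm_eq_lintegral_enorm (hint n)]
    congr 1
    apply setIntegral_congr_fun measurableSet_Ioi
    intro r hr
    exact Real.norm_of_nonneg (hpos n r hr)
  have hsum : (∑' n : ℕ, ∫⁻ r in Set.Ioi R, ‖h n r‖₊) ≠ ⊤ := by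
    have hle : (∑' n : ℕ, ∫⁻ r in Set.Ioi R, ‖h n r‖₊)
        ≤ ∑' n : ℕ, ENNReal.ofReal (ν ^ n / (n.factorial : ℝ)) := by
      apply ENNReal.tsum_le_tsum
      intro n
      rw [hlin n]
      exact ENNReal.ofReal_le_ofReal (hbound n)
    apply ne_top_of_le_ne_top ?_ hle
    rw [← ENNReal.ofReal_tsum_of_nonneg (fun n => by positivity)
      (Real.summable_pow_div_factorial ν)]
    exact ENNReal.ofReal_ne_top
  have hpt : ∀ r ∈ Set.Ioi R, fr r = Real.exp (-ν) * ∑' n : ℕ, h n r := by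
    intro r hr
    have hr0 : 0 ≤ r := le_trans hR0 (le_of_lt hr)
    rw [hfr r hr0, hI0, ← tsum_mul_left, ← tsum_mul_left]
    apply tsum_congr
    intro n
    have e1 : Real.exp (-((r ^ 2 + s ^ 2) / (2 * ℓ ^ 2 * σ ^ 2)))
        = Real.exp (-ν) * Real.exp (-(r ^ 2 / (2 * C))) := by
      rw [← Real.exp_add]
      congr 1
      rw [hν, hCdef]
      field_simp
      ring
    have base : (r * s / (ℓ ^ 2 * σ ^ 2) / 2) ^ 2 = ν * (r ^ 2 / (2 * C)) := by
      rw [hν, hCdef]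
      field_simp
    have e2 : (r * s / (ℓ ^ 2 * σ ^ 2) / 2) ^ (2 * n)
        = ν ^ n * (r ^ 2 / (2 * C)) ^ n := by
      rw [pow_mul, base, mul_pow]
    rw [hhdef]
    simp only
    rw [e1, e2, hCdef]
    ring
  calc (∫ r in Set.Ioi R, fr r)
      = ∫ r in Set.Ioi R, Real.exp (-ν) * ∑' n : ℕ, h n r :=
        setIntegral_congr_fun measurableSet_Ioi hpt
    _ = Real.exp (-ν) * ∫ r in Set.Ioi R, ∑' n : ℕ, h n r :=
        MeasureTheory.integral_const_mul _ _
    _ = Real.exp (-ν) * ∑' n : ℕ, ∫ r in Set.Ioi R, h n r := by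
        rw [MeasureTheory.integral_tsum hmeas hsum]
    _ = Real.exp (-ν) * ∑' n : ℕ, (ν ^ n / ((n.factorial : ℝ)) ^ 2) *
          ∫ ξ in Set.Ioi bb, ξ ^ n * Real.exp (-ξ) := by
        congr 1
        exact tsum_congr hval
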